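/- For q > 0 symmetric a priori measure with α(0)/α(1) = q and any β ≤ 2 + q·e, the unique maximizer of ν ↦ -β·ν(1)·ν(-1) - I(ν|α) over probability measures ν on {-1,0,1} is the unique symmetric solution ν_s of e^{-βν(1)} = q·ν(1)/(1 - 2ν(1)) with ν(1)=ν(-1); for β > 2 + q·e there are exactly two maximizers, which are related by exchanging the weights of +1 and -1. -/

import Mathlib

open Real

/-- Coordinates: `ν = (ν(-1), ν(0), ν(1))`. -/
def WRsimplex : Set (ℝ × ℝ × ℝ) :=
  {ν | 0 ≤ ν.1 ∧ 0 ≤ ν.2.1 ∧ 0 ≤ ν.2.2 ∧ ν.1 + ν.2.1 + ν.2.2 = 1}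

/-- Relative entropy of `ν` with respect to the symmetric a priori measure
`α = (a₁, q·a₁, a₁)` (with the convention `0 · log 0 = 0`). -/
noncomputable def WRrelEnt (a₁ q : ℝ) (ν : ℝ × ℝ × ℝ) : ℝ :=
  ν.1 * Real.log (ν.1 / a₁) + ν.2.1 * Real.log (ν.2.1 / (q * a₁)) +
    ν.2.2 * Real.log (ν.2.2 / a₁)

/-- The free energy functional `ν ↦ -β ν(1) ν(-1) - I(ν|α)`. -/
noncomputable def WRfreeEnergy (β a₁ q : ℝ) (ν : ℝ × ℝ × ℝ) : ℝ :=
  -β * ν.2.2 * ν.1 - WRrelEnt a₁ q ν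

namespace WRaux

/-- the rectangle of magnetization/occupation pairs -/
def rect : Set (ℝ × ℝ) := Set.Icc (-1 : ℝ) 1 ×ˢ Set.Icc (0 : ℝ) 1

/-- the comparison "tilted" measure -/
noncomputable def nu (β m s : ℝ) : ℝ × ℝ × ℝ :=
  (s * Real.exp (β * m / 2) / (2 * Real.cosh (β * m / 2)), 1 - s,
   s * Real.exp (-(β * m / 2)) / (2 * Real.cosh (β * m / 2)))

/-- the reduced two-variable free energy -/
noncomputable def chi (β q a m s : ℝ) : ℝ :=
  -(β / 4) * s ^ 2 - (β / 4) * m ^ 2 + s * Real.log (2 * Real.cosh (β * m / 2))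
    - s * Real.log s - (1 - s) * Real.log (1 - s)
    + s * Real.log a + (1 - s) * Real.log (q * a)

/-- the symmetric one-dimensional criticality function -/
noncomputable def R0 (β q s : ℝ) : ℝ :=
  Real.log 2 + Real.log (1 - s) - Real.log s - Real.log q - β / 2 * s

noncomputable def T (u : ℝ) : ℝ := u * Real.cosh u / Real.sinh u

/-- the asymmetric criticality function -/
noncomputable def Phi (β q u : ℝ) : ℝ :=
  Real.log (β * Real.sinh u - 2 * u * Real.cosh u) - Real.log u - Real.log q - T u

def U (β : ℝ) : Set ℝ := {u | 0 < u ∧ T u < β / 2}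

section lemmas
variable {β q a : ℝ}

lemma mul_log_div_split (x c : ℝ) (hc : c ≠ 0) :
    x * Real.log (x / c) = x * Real.log x - x * Real.log c := by
  rcases eq_or_ne x 0 with rfl | hx
  · simp
  · rw [Real.log_div hx hc]; ring

lemma gibbs {x b : ℝ} (hx : 0 ≤ x) (hb : 0 < b) :
    x - b ≤ x * Real.log x - x * Real.log b := by
  rcases hx.eq_or_lt with rfl | hx
  · simpa using hb.le
  · have h := Real.log_le_sub_one_of_pos (div_pos hb hx)
    rw [Real.log_div hb.ne' hx.ne'] at h
    have h2 := mul_le_mul_of_nonneg_left h hx.le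
    have h3 : x * (b / x - 1) = b - x := by field_simp
    nlinarith


lemma lemA (hq : 0 < q) (ha : 0 < a) {ν : ℝ × ℝ × ℝ} (hν : ν ∈ WRsimplex) :
    WRfreeEnergy β a q ν ≤ chi β q a (ν.1 - ν.2.2) (ν.1 + ν.2.2) := by
  obtain ⟨hx, hy, hz, hsum⟩ := hν
  set x := ν.1 with hxd
  set y := ν.2.1 with hyd
  set z := ν.2.2 with hzd
  set m := x - z with hm
  set s := x + z with hs
  have hyeq : y = 1 - s := by rw [hs]; linarith
  set u := β * m / 2 with hu
  have hc : 0 < Real.cosh u := Real.cosh_pos u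
  have hF : WRfreeEnergy β a q ν = -β * z * x - x * Real.log x - z * Real.log z
      - (1 - s) * Real.log (1 - s) + s * Real.log a + (1 - s) * Real.log (q * a) := by
    rw [WRfreeEnergy, WRrelEnt, ← hxd, ← hyd, ← hzd, mul_log_div_split _ _ ha.ne',
      mul_log_div_split _ _ (by positivity), mul_log_div_split _ _ ha.ne', hyeq, hs]
    ring
  clear_value x y z m s u
  have key : β/2*m^2 - s*Real.log (2*Real.cosh u) + s*Real.log s
      ≤ x*Real.log x + z*Real.log z := by
    have hsnn : (0:ℝ) ≤ s := by rw [hs]; exact add_nonneg hx hz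
    rcases hsnn.eq_or_lt with hs0 | hs0
    · have hx0 : x = 0 := by rw [hs] at hs0; linarith
      have hz0 : z = 0 := by rw [hs] at hs0; linarith
      have hm0 : m = 0 := by rw [hm, hx0, hz0]; ring
      simp [hx0, hz0, hm0, ← hs0]
    · set c := Real.cosh u with hcd
      set b1 := s * Real.exp u / (2*c) with hb1
      set b2 := s * Real.exp (-u) / (2*c) with hb2
      clear_value c b1 b2
      have hb1p : 0 < b1 := by
        rw [hb1]; exact div_pos (mul_pos hs0 (Real.exp_pos u)) (by linarith)
      have hb2p : 0 < b2 := by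
        rw [hb2]; exact div_pos (mul_pos hs0 (Real.exp_pos _)) (by linarith)
      have g1 := gibbs hx hb1p
      have g2 := gibbs hz hb2p
      have hexp : Real.exp u + Real.exp (-u) = 2*c := by
        rw [hcd, Real.cosh_eq]; ring
      have hbsum : b1 + b2 = s := by
        rw [hb1, hb2, ← add_div, ← mul_add, hexp]
        field_simp
      have hlb1 : Real.log b1 = Real.log s + u - Real.log (2*c) := by
        rw [hb1, Real.log_div (by positivity) (by positivity),
          Real.log_mul hs0.ne' (Real.exp_ne_zero u), Real.log_exp]
      have hlb2 : Real.log b2 = Real.log s - u - Real.log (2*c) := by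
        rw [hb2, Real.log_div (by positivity) (by positivity),
          Real.log_mul hs0.ne' (Real.exp_ne_zero _), Real.log_exp]
        ring
      have hum : u * m = β/2*m^2 := by rw [hu]; ring
      have e1 : x*Real.log b1 + z*Real.log b2
          = s*Real.log s + u*m - s*Real.log (2*c) := by
        rw [hlb1, hlb2, hm, hs]; ring
      linarith [g1, g2, e1, hbsum, hum, hs]
  have comb : -β*z*x = -(β/4)*s^2 - (β/4)*m^2 + β/2*m^2 := by
    simp only [hs, hm]; ring
  rw [hF, chi, show β * m / 2 = u from hu.symm]
  linarith [key, comb]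


lemma nu_mem (β : ℝ) {s : ℝ} (hs0 : 0 ≤ s) (hs1 : s ≤ 1) (m : ℝ) : nu β m s ∈ WRsimplex := by
  have hc : 0 < Real.cosh (β*m/2) := Real.cosh_pos _
  have hexp : Real.exp (β*m/2) + Real.exp (-(β*m/2)) = 2*Real.cosh (β*m/2) := by
    rw [Real.cosh_eq]; ring
  have hsum : s * Real.exp (β*m/2) / (2*Real.cosh (β*m/2))
      + s * Real.exp (-(β*m/2)) / (2*Real.cosh (β*m/2)) = s := by
    rw [← add_div, ← mul_add, hexp]
    field_simp
  refine ⟨?_, ?_, ?_, ?_⟩ <;> simp only [nu]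
  · exact div_nonneg (mul_nonneg hs0 (Real.exp_pos _).le) (by positivity)
  · linarith
  · exact div_nonneg (mul_nonneg hs0 (Real.exp_pos _).le) (by positivity)
  · linarith [hsum]

lemma chi_even (m s : ℝ) : chi β q a (-m) s = chi β q a m s := by
  simp only [chi]
  rw [show β * -m / 2 = -(β*m/2) by ring, Real.cosh_neg]
  ring

lemma lemB (hq : 0 < q) (ha : 0 < a) {s : ℝ} (hs0 : 0 ≤ s) (m : ℝ) :
    chi β q a m s = WRfreeEnergy β a q (nu β m s)
      - β/4 * (s * Real.sinh (β*m/2) / Real.cosh (β*m/2) - m)^2 := by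
  set u := β*m/2 with hu
  have hc : 0 < Real.cosh u := Real.cosh_pos u
  have hEE : Real.exp (-u) * Real.exp u = 1 := by rw [← Real.exp_add]; simp
  rcases hs0.eq_or_lt with rfl | hs
  · simp only [chi, nu, WRfreeEnergy, WRrelEnt, zero_mul, mul_zero, zero_div, sub_zero,
      Real.log_zero, Real.log_one, one_mul, zero_add, zero_sub, sub_self]
    rw [one_div, Real.log_inv]
    ring
  · have hlx : Real.log (s * Real.exp u / (2*Real.cosh u))
        = Real.log s + u - Real.log (2*Real.cosh u) := by
      rw [Real.log_div (by positivity) (by positivity),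
        Real.log_mul hs.ne' (Real.exp_ne_zero u), Real.log_exp]
    have hlz : Real.log (s * Real.exp (-u) / (2*Real.cosh u))
        = Real.log s - u - Real.log (2*Real.cosh u) := by
      rw [Real.log_div (by positivity) (by positivity),
        Real.log_mul hs.ne' (Real.exp_ne_zero _), Real.log_exp]
      ring
    have hXZ : (s * Real.exp (-u) / (2*Real.cosh u)) * (s * Real.exp u / (2*Real.cosh u))
        = s^2/(4*Real.cosh u^2) := by
      field_simp
      linear_combination 4 * hEE
    have hXpZ : (s * Real.exp u / (2*Real.cosh u)) + (s * Real.exp (-u) / (2*Real.cosh u))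
        = s := by
      rw [← add_div, ← mul_add, show Real.exp u + Real.exp (-u) = 2*Real.cosh u by
        rw [Real.cosh_eq]; ring]
      field_simp
    have hXmZ : (s * Real.exp u / (2*Real.cosh u)) - (s * Real.exp (-u) / (2*Real.cosh u))
        = s * Real.sinh u / Real.cosh u := by
      rw [div_sub_div_same, ← mul_sub, show Real.exp u - Real.exp (-u) = 2*Real.sinh u by
        rw [Real.sinh_eq]; ring]
      field_simp
    have hcs : Real.cosh u ^2 = Real.sinh u ^2 + 1 := Real.cosh_sq u
    rw [chi, WRfreeEnergy, WRrelEnt]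
    simp only [nu, ← hu]
    rw [mul_log_div_split _ _ ha.ne', mul_log_div_split _ _ (by positivity : (q*a) ≠ 0),
      mul_log_div_split _ _ ha.ne', hlx, hlz]
    have hinv : Real.cosh u * (Real.cosh u)⁻¹ = 1 := mul_inv_cancel₀ hc.ne'
    linear_combination (β)*hXZ
      + (Real.log s - Real.log (2*Real.cosh u) - Real.log a)*hXpZ + u*hXmZ
      + (s*Real.sinh u/Real.cosh u)*hu + (-(β*s^2)/(4*Real.cosh u^2))*hcs
      + (β*s^2/4*(Real.cosh u*(Real.cosh u)⁻¹ + 1))*hinv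


lemma cont_mul_log : Continuous (fun x : ℝ => x * Real.log x) := by
  have h := Real.continuous_negMulLog.neg
  convert h using 1
  funext x
  simp [Real.negMulLog]

lemma chi_cont : Continuous (fun p : ℝ × ℝ => chi β q a p.1 p.2) := by
  unfold chi
  have cA : Continuous fun p : ℝ×ℝ => -(β/4) * p.2^2 := by fun_prop
  have cB : Continuous fun p : ℝ×ℝ => (β/4) * p.1^2 := by fun_prop
  have cC : Continuous fun p : ℝ×ℝ => p.2 * Real.log (2*Real.cosh (β*p.1/2)) := by
    apply continuous_snd.mul
    apply Continuous.log
    · fun_prop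
    · intro p
      have := Real.cosh_pos (β*p.1/2)
      positivity
  have cD : Continuous fun p : ℝ×ℝ => p.2 * Real.log p.2 :=
    cont_mul_log.comp continuous_snd
  have cE : Continuous fun p : ℝ×ℝ => (1-p.2) * Real.log (1-p.2) :=
    cont_mul_log.comp (continuous_const.sub continuous_snd)
  have cF : Continuous fun p : ℝ×ℝ => p.2 * Real.log a := by fun_prop
  have cG : Continuous fun p : ℝ×ℝ => (1-p.2) * Real.log (q*a) := by fun_prop
  exact (((((cA.sub cB).add cC).sub cD).sub cE).add cF).add cG

lemma exists_argmax :
    ∃ p ∈ rect, IsMaxOn (fun p : ℝ × ℝ => chi β q a p.1 p.2) rect p := by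
  have hcomp : IsCompact rect := isCompact_Icc.prod isCompact_Icc
  have hne : rect.Nonempty :=
    ⟨(0,0), ⟨Set.mem_Icc.2 ⟨by norm_num, by norm_num⟩, Set.mem_Icc.2 ⟨le_refl _, by norm_num⟩⟩⟩
  obtain ⟨p, hp, hmax⟩ := hcomp.exists_isMaxOn hne chi_cont.continuousOn
  exact ⟨p, hp, hmax⟩

lemma simplex_pair_mem_rect {ν : ℝ×ℝ×ℝ} (hν : ν ∈ WRsimplex) :
    (ν.1 - ν.2.2, ν.1 + ν.2.2) ∈ rect := by
  obtain ⟨hx, hy, hz, hsum⟩ := hν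
  refine ⟨Set.mem_Icc.2 ⟨?_, ?_⟩, Set.mem_Icc.2 ⟨?_, ?_⟩⟩ <;> dsimp only <;> linarith

lemma F_max_to_argmax (hq : 0 < q) (ha : 0 < a) (hβ : 0 < β) {ν : ℝ×ℝ×ℝ}
    (hν : ν ∈ WRsimplex) (hmax : IsMaxOn (WRfreeEnergy β a q) WRsimplex ν) :
    IsMaxOn (fun p : ℝ × ℝ => chi β q a p.1 p.2) rect (ν.1 - ν.2.2, ν.1 + ν.2.2) := by
  intro p hp
  simp only [Set.mem_setOf_eq]
  have h1 := lemB (β := β) hq ha hp.2.1 p.1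
  have h2 : WRfreeEnergy β a q (nu β p.1 p.2) ≤ WRfreeEnergy β a q ν :=
    hmax (nu_mem β hp.2.1 hp.2.2 p.1)
  have h3 := lemA (β := β) hq ha hν
  have h4 : 0 ≤ β/4 * (p.2 * Real.sinh (β*p.1/2) / Real.cosh (β*p.1/2) - p.1)^2 := by
    positivity
  calc chi β q a p.1 p.2 ≤ WRfreeEnergy β a q (nu β p.1 p.2) := by linarith
    _ ≤ WRfreeEnergy β a q ν := h2
    _ ≤ _ := h3

lemma argmax_F_and_cons (hq : 0 < q) (ha : 0 < a) (hβ : 0 < β) {p : ℝ×ℝ} (hp : p ∈ rect)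
    (hmax : IsMaxOn (fun p : ℝ × ℝ => chi β q a p.1 p.2) rect p) :
    IsMaxOn (WRfreeEnergy β a q) WRsimplex (nu β p.1 p.2) ∧
      p.2 * Real.sinh (β*p.1/2) = p.1 * Real.cosh (β*p.1/2) := by
  have hc : 0 < Real.cosh (β*p.1/2) := Real.cosh_pos _
  have claim1 : ∀ ν ∈ WRsimplex, WRfreeEnergy β a q ν ≤ chi β q a p.1 p.2 := by
    intro ν hν
    have h3 := lemA (β := β) hq ha hν
    have h4 := hmax (simplex_pair_mem_rect hν)
    simp only [Set.mem_setOf_eq] at h4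
    linarith
  have hBB := lemB (β := β) hq ha hp.2.1 p.1
  have hFn : WRfreeEnergy β a q (nu β p.1 p.2) ≤ chi β q a p.1 p.2 :=
    claim1 _ (nu_mem β hp.2.1 hp.2.2 p.1)
  have hd2 : β/4 * (p.2 * Real.sinh (β*p.1/2) / Real.cosh (β*p.1/2) - p.1)^2 ≤ 0 := by
    linarith
  have hd0 : p.2 * Real.sinh (β*p.1/2) / Real.cosh (β*p.1/2) - p.1 = 0 := by
    have h4 : 0 ≤ (p.2 * Real.sinh (β*p.1/2) / Real.cosh (β*p.1/2) - p.1)^2 := sq_nonneg _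
    have : (p.2 * Real.sinh (β*p.1/2) / Real.cosh (β*p.1/2) - p.1)^2 = 0 := by nlinarith
    exact pow_eq_zero_iff (by norm_num) |>.1 this
  constructor
  · intro ν hν
    simp only [Set.mem_setOf_eq]
    have := claim1 ν hν
    rw [hBB, hd0] at this
    simpa using this
  · have h5 : p.2 * Real.sinh (β*p.1/2) / Real.cosh (β*p.1/2) = p.1 := by linarith
    field_simp at h5
    linarith [h5]

lemma nu_eq_e {m s : ℝ} (hcons : s * Real.sinh (β*m/2) = m * Real.cosh (β*m/2)) :
    nu β m s = ((s+m)/2, 1-s, (s-m)/2) := by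
  have hc := Real.cosh_pos (β*m/2)
  unfold nu
  have hE : Real.exp (β*m/2) = Real.cosh (β*m/2) + Real.sinh (β*m/2) :=
    (Real.cosh_add_sinh _).symm
  have hE2 : Real.exp (-(β*m/2)) = Real.cosh (β*m/2) - Real.sinh (β*m/2) :=
    (Real.cosh_sub_sinh _).symm
  have h1 : s * Real.exp (β*m/2) / (2*Real.cosh (β*m/2)) = (s+m)/2 := by
    rw [div_eq_div_iff (by positivity) (by norm_num : (2:ℝ) ≠ 0)]
    linear_combination 2*hcons + 2*s*hE
  have h2 : s * Real.exp (-(β*m/2)) / (2*Real.cosh (β*m/2)) = (s-m)/2 := by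
    rw [div_eq_div_iff (by positivity) (by norm_num : (2:ℝ) ≠ 0)]
    linear_combination (-2)*hcons + 2*s*hE2
  rw [h1, h2]


lemma argmax_s_pos (hq : 0 < q) (ha : 0 < a) (hβ : 0 < β) {p : ℝ×ℝ} (hp : p ∈ rect)
    (hmax : IsMaxOn (fun p : ℝ × ℝ => chi β q a p.1 p.2) rect p) : 0 < p.2 := by
  rcases hp.2.1.eq_or_lt with h0 | h0
  · exfalso
    set L := Real.log (2*Real.cosh (β*p.1/2)) with hL
    set δ := min (1/2 : ℝ) (Real.exp (-β/4 + L + Real.log a - Real.log (q*a) - 1)) with hδ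
    have hδ0 : 0 < δ := lt_min (by norm_num) (Real.exp_pos _)
    have hδh : δ ≤ 1/2 := min_le_left _ _
    have hδlog : Real.log δ ≤ -β/4 + L + Real.log a - Real.log (q*a) - 1 := by
      calc Real.log δ ≤ Real.log (Real.exp (-β/4 + L + Real.log a - Real.log (q*a) - 1)) :=
            Real.log_le_log hδ0 (min_le_right _ _)
        _ = _ := Real.log_exp _
    have hmem : ((p.1, δ) : ℝ × ℝ) ∈ rect := by
      refine ⟨hp.1, Set.mem_Icc.2 ⟨?_, ?_⟩⟩ <;> dsimp only <;> linarith
    have hle := hmax hmem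
    simp only [Set.mem_setOf_eq] at hle
    have hc0 : chi β q a p.1 p.2 = -(β/4)*p.1^2 + Real.log (q*a) := by
      rw [← h0, chi]
      norm_num
    have hexpand : chi β q a p.1 δ = -(β/4)*δ^2 - (β/4)*p.1^2 + δ*L - δ*Real.log δ
        - (1-δ)*Real.log (1-δ) + δ*Real.log a + (1-δ)*Real.log (q*a) := by
      rw [chi, hL]
    have hlog1δ : Real.log (1-δ) ≤ 0 := Real.log_nonpos (by linarith) (by linarith)
    have E1 : δ*Real.log δ ≤ δ*(-β/4 + L + Real.log a - Real.log (q*a) - 1) :=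
      mul_le_mul_of_nonneg_left hδlog hδ0.le
    have E2 : (1-δ)*Real.log (1-δ) ≤ 0 := by nlinarith [hlog1δ]
    have hsq : δ^2 ≤ δ := by nlinarith [mul_nonneg hδ0.le (show (0:ℝ) ≤ 1-δ by linarith)]
    have E3 : β*δ^2 ≤ β*δ := mul_le_mul_of_nonneg_left hsq hβ.le
    rw [hexpand, hc0] at hle
    nlinarith [hle, E1, E2, E3]
  · exact h0

lemma argmax_s_lt_one (hq : 0 < q) (ha : 0 < a) (hβ : 0 < β) {p : ℝ×ℝ} (hp : p ∈ rect)
    (hmax : IsMaxOn (fun p : ℝ × ℝ => chi β q a p.1 p.2) rect p) : p.2 < 1 := by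
  rcases eq_or_lt_of_le hp.2.2 with h0 | h0
  · exfalso
    set L := Real.log (2*Real.cosh (β*p.1/2)) with hL
    set δ := min (1/2 : ℝ) (Real.exp (-L - Real.log a + Real.log (q*a) - 1)) with hδ
    have hδ0 : 0 < δ := lt_min (by norm_num) (Real.exp_pos _)
    have hδh : δ ≤ 1/2 := min_le_left _ _
    have hδlog : Real.log δ ≤ -L - Real.log a + Real.log (q*a) - 1 := by
      calc Real.log δ ≤ Real.log (Real.exp (-L - Real.log a + Real.log (q*a) - 1)) :=
            Real.log_le_log hδ0 (min_le_right _ _)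
        _ = _ := Real.log_exp _
    have hmem : ((p.1, 1-δ) : ℝ × ℝ) ∈ rect := by
      refine ⟨hp.1, Set.mem_Icc.2 ⟨?_, ?_⟩⟩ <;> dsimp only <;> linarith
    have hle := hmax hmem
    simp only [Set.mem_setOf_eq] at hle
    have hc0 : chi β q a p.1 p.2 = -(β/4) - (β/4)*p.1^2 + L + Real.log a := by
      rw [h0, chi, hL]
      norm_num
    have hexpand : chi β q a p.1 (1-δ) = -(β/4)*(1-δ)^2 - (β/4)*p.1^2 + (1-δ)*L
        - (1-δ)*Real.log (1-δ) - δ*Real.log δ + (1-δ)*Real.log a + δ*Real.log (q*a) := by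
      rw [chi, hL, show (1:ℝ) - (1-δ) = δ by ring]
    have hlog1δ : Real.log (1-δ) ≤ 0 := Real.log_nonpos (by linarith) (by linarith)
    have E1 : δ*Real.log δ ≤ δ*(-L - Real.log a + Real.log (q*a) - 1) :=
      mul_le_mul_of_nonneg_left hδlog hδ0.le
    have E2 : (1-δ)*Real.log (1-δ) ≤ 0 := by nlinarith [hlog1δ]
    have hsq : δ^2 ≤ δ := by nlinarith [mul_nonneg hδ0.le (show (0:ℝ) ≤ 1-δ by linarith)]
    have E3 : 0 ≤ β*(2*δ-δ^2) := by
      have : (0:ℝ) ≤ 2*δ-δ^2 := by nlinarith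
      positivity
    rw [hexpand, hc0] at hle
    nlinarith [hle, E1, E2, E3]
  · exact h0

lemma hasDerivAt_chi_s (m : ℝ) {s : ℝ} (hs0 : 0 < s) (hs1 : s < 1) :
    HasDerivAt (fun t => chi β q a m t)
      (-(β/2)*s + Real.log (2*Real.cosh (β*m/2)) - Real.log s + Real.log (1-s)
        + Real.log a - Real.log (q*a)) s := by
  have hone : (1:ℝ) - s ≠ 0 := by linarith
  have inner : HasDerivAt (fun t : ℝ => 1 - t) (-1) s := by
    exact (hasDerivAt_id' s).const_sub 1
  have h1 : HasDerivAt (fun t : ℝ => -(β/4)*t^2) (-(β/4)*(2*s^1)) s :=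
    (hasDerivAt_pow 2 s).const_mul _
  have h2 : HasDerivAt (fun _ : ℝ => (β/4)*m^2) 0 s := hasDerivAt_const _ _
  have h3 : HasDerivAt (fun t : ℝ => t * Real.log (2*Real.cosh (β*m/2)))
      (Real.log (2*Real.cosh (β*m/2))) s := by
    simpa using (hasDerivAt_id s).mul_const (Real.log (2*Real.cosh (β*m/2)))
  have h4 : HasDerivAt (fun t : ℝ => t * Real.log t) (Real.log s + 1) s :=
    Real.hasDerivAt_mul_log hs0.ne'
  have h5 : HasDerivAt (fun t : ℝ => (1-t) * Real.log (1-t)) ((Real.log (1-s) + 1)*(-1)) s :=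
    (Real.hasDerivAt_mul_log hone).comp s inner
  have h6 : HasDerivAt (fun t : ℝ => t * Real.log a) (Real.log a) s := by
    simpa using (hasDerivAt_id s).mul_const (Real.log a)
  have h7 : HasDerivAt (fun t : ℝ => (1-t) * Real.log (q*a)) ((-1) * Real.log (q*a)) s :=
    inner.mul_const _
  have H := (((((h1.sub h2).add h3).sub h4).sub h5).add h6).add h7
  have Hc : HasDerivAt (fun t => chi β q a m t)
      (-(β/4)*(2*s^1) - 0 + Real.log (2*Real.cosh (β*m/2)) - (Real.log s + 1)
        - (Real.log (1-s) + 1)*(-1) + Real.log a + (-1) * Real.log (q*a)) s := by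
    unfold chi
    exact H
  convert Hc using 1
  ring

lemma argmax_star (hq : 0 < q) (ha : 0 < a) (hβ : 0 < β) {p : ℝ×ℝ} (hp : p ∈ rect)
    (hmax : IsMaxOn (fun p : ℝ × ℝ => chi β q a p.1 p.2) rect p)
    (hs0 : 0 < p.2) (hs1 : p.2 < 1) :
    Real.log (2*Real.cosh (β*p.1/2)) + Real.log (1-p.2) - Real.log p.2 - Real.log q
      = β/2*p.2 := by
  have hloc : IsLocalMax (fun t => chi β q a p.1 t) p.2 := by
    filter_upwards [Ioo_mem_nhds hs0 hs1] with t ht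
    have hmem : ((p.1, t) : ℝ × ℝ) ∈ rect := ⟨hp.1, Set.mem_Icc.2 ⟨ht.1.le, ht.2.le⟩⟩
    simpa only [Set.mem_setOf_eq] using hmax hmem
  have h0 := hloc.hasDerivAt_eq_zero (hasDerivAt_chi_s p.1 hs0 hs1)
  have hlq : Real.log (q*a) = Real.log q + Real.log a := Real.log_mul hq.ne' ha.ne'
  linarith [h0, hlq]

lemma hasDerivAt_R0 {s : ℝ} (hs0 : 0 < s) (hs1 : s < 1) :
    HasDerivAt (R0 β q) (-(1/(1-s)) - 1/s - β/2) s := by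
  have hone : (1:ℝ) - s ≠ 0 := by linarith
  have inner : HasDerivAt (fun t : ℝ => 1 - t) (-1) s := by
    exact (hasDerivAt_id' s).const_sub 1
  have h1 : HasDerivAt (fun t : ℝ => Real.log (1 - t)) ((1-s)⁻¹ * (-1)) s :=
    (Real.hasDerivAt_log hone).comp s inner
  have h2 : HasDerivAt (fun t : ℝ => Real.log t) s⁻¹ s := Real.hasDerivAt_log hs0.ne'
  have h3 : HasDerivAt (fun t : ℝ => β/2*t) (β/2*1) s := (hasDerivAt_id s).const_mul (β/2)
  have H := ((((hasDerivAt_const s (Real.log 2)).add h1).sub h2).sub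
    (hasDerivAt_const s (Real.log q))).sub h3
  have Hc : HasDerivAt (R0 β q) (0 + (1-s)⁻¹*(-1) - s⁻¹ - 0 - β/2*1) s := by
    unfold R0
    exact H
  convert Hc using 1
  field_simp
  ring

lemma R0_strictAnti (hβ : 0 < β) : StrictAntiOn (R0 β q) (Set.Ioo 0 1) := by
  apply strictAntiOn_of_deriv_neg (convex_Ioo 0 1)
  · intro x hx
    exact (hasDerivAt_R0 (β := β) (q := q) hx.1 hx.2).continuousAt.continuousWithinAt
  · intro x hx
    rw [interior_Ioo] at hx
    rw [(hasDerivAt_R0 hx.1 hx.2).deriv]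
    have i1 : 0 < 1/(1-x) := one_div_pos.2 (by linarith [hx.2])
    have i2 : 0 < 1/x := one_div_pos.2 hx.1
    linarith


lemma sinh_lt_mul_cosh {u : ℝ} (hu : 0 < u) : Real.sinh u < u * Real.cosh u := by
  have key : StrictMonoOn (fun v : ℝ => v * Real.cosh v - Real.sinh v) (Set.Ici 0) := by
    apply strictMonoOn_of_deriv_pos (convex_Ici 0)
    · fun_prop
    · intro x hx
      rw [interior_Ici] at hx
      have hD : HasDerivAt (fun v : ℝ => v * Real.cosh v - Real.sinh v) (x * Real.sinh x) x := by
        have h1 := ((hasDerivAt_id x).mul (Real.hasDerivAt_cosh x)).sub (Real.hasDerivAt_sinh x)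
        refine h1.congr_deriv ?_
        simp
        try ring
      rw [hD.deriv]
      exact mul_pos hx (Real.sinh_pos_iff.2 hx)
  have h := key (Set.self_mem_Ici) (Set.mem_Ici.2 hu.le) hu
  norm_num at h
  linarith

lemma one_lt_T {u : ℝ} (hu : 0 < u) : 1 < T u := by
  unfold T
  rw [lt_div_iff₀ (Real.sinh_pos_iff.2 hu)]
  simpa using sinh_lt_mul_cosh hu

lemma hasDerivAt_T {u : ℝ} (hu : u ≠ 0) :
    HasDerivAt T ((Real.cosh u * Real.sinh u - u)/Real.sinh u^2) u := by
  have hs : Real.sinh u ≠ 0 := Real.sinh_ne_zero.2 hu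
  have h := ((hasDerivAt_id u).mul (Real.hasDerivAt_cosh u)).div (Real.hasDerivAt_sinh u) hs
  have hT : HasDerivAt T
      (((1 * Real.cosh u + u * Real.sinh u) * Real.sinh u - u * Real.cosh u * Real.cosh u)
        / Real.sinh u ^ 2) u := by
    unfold T
    exact h
  convert hT using 1
  have hcs := Real.cosh_sq u
  field_simp
  linear_combination u * hcs

lemma T_strictMono : StrictMonoOn T (Set.Ioi 0) := by
  apply strictMonoOn_of_deriv_pos (convex_Ioi 0)
  · intro x hx
    exact (hasDerivAt_T (ne_of_gt hx)).continuousAt.continuousWithinAt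
  · intro x hx
    rw [interior_Ioi] at hx
    rw [(hasDerivAt_T hx.ne').deriv]
    have h1 : 0 < Real.sinh x := Real.sinh_pos_iff.2 hx
    have h2 : x < Real.sinh x := Real.self_lt_sinh_iff.2 hx
    have h3 : 1 ≤ Real.cosh x := Real.one_le_cosh x
    apply div_pos ?_ (by positivity)
    nlinarith

lemma U_mem_of_le {β u v : ℝ} (hv : v ∈ U β) (h0 : 0 < u) (huv : u ≤ v) : u ∈ U β := by
  rcases huv.eq_or_lt with rfl | hlt
  · exact hv
  · exact ⟨h0, lt_trans (T_strictMono (Set.mem_Ioi.2 h0) (Set.mem_Ioi.2 hv.1) hlt) hv.2⟩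

lemma U_convex (β : ℝ) : Convex ℝ (U β) := by
  have h : (U β).OrdConnected := by
    constructor
    intro x hx y hy z hz
    exact U_mem_of_le hy (lt_of_lt_of_le hx.1 hz.1) hz.2
  exact h.convex

lemma W_pos {β u : ℝ} (hu : u ∈ U β) : 0 < β*Real.sinh u - 2*u*Real.cosh u := by
  have h1 : T u < β/2 := hu.2
  have hs : 0 < Real.sinh u := Real.sinh_pos_iff.2 hu.1
  unfold T at h1
  rw [div_lt_div_iff₀ hs (by norm_num : (0:ℝ) < 2)] at h1
  linarith

lemma hasDerivAt_Phi {β q u : ℝ} (hu : u ∈ U β) :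
    HasDerivAt (Phi β q)
      ((β*Real.cosh u - (2*1*Real.cosh u + 2*u*Real.sinh u))/(β*Real.sinh u - 2*u*Real.cosh u)
        - u⁻¹ - (Real.cosh u*Real.sinh u - u)/Real.sinh u^2) u := by
  have hW := W_pos hu
  have hWd : HasDerivAt (fun v : ℝ => β*Real.sinh v - 2*v*Real.cosh v)
      (β*Real.cosh u - (2*1*Real.cosh u + 2*u*Real.sinh u)) u := by
    have h1 := (Real.hasDerivAt_sinh u).const_mul β
    have h2 := (((hasDerivAt_id u).const_mul 2).mul (Real.hasDerivAt_cosh u))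
    exact h1.sub h2
  have h1 := hWd.log hW.ne'
  have h2 := Real.hasDerivAt_log (ne_of_gt hu.1)
  have h3 := hasDerivAt_T hu.1.ne'
  have H := ((h1.sub h2).sub (hasDerivAt_const u (Real.log q))).sub h3
  have HP : HasDerivAt (Phi β q)
      ((β*Real.cosh u - (2*1*Real.cosh u + 2*u*Real.sinh u))/(β*Real.sinh u - 2*u*Real.cosh u)
        - u⁻¹ - 0 - (Real.cosh u*Real.sinh u - u)/Real.sinh u^2) u := by
    unfold Phi
    exact H
  convert HP using 1
  ring

lemma Phi_deriv_neg {β q u : ℝ} (hβ : 0 < β) (hu : u ∈ U β) :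
    (β*Real.cosh u - (2*1*Real.cosh u + 2*u*Real.sinh u))/(β*Real.sinh u - 2*u*Real.cosh u)
      - u⁻¹ - (Real.cosh u*Real.sinh u - u)/Real.sinh u^2 < 0 := by
  have hu0 := hu.1
  have hW := W_pos hu
  have hs : 0 < Real.sinh u := Real.sinh_pos_iff.2 hu0
  have hsu : u < Real.sinh u := Real.self_lt_sinh_iff.2 hu0
  have hcs1 : Real.sinh u < u * Real.cosh u := sinh_lt_mul_cosh hu0
  have hcsq := Real.cosh_sq u
  have hc : 0 < Real.cosh u := Real.cosh_pos u
  set A := β*Real.cosh u - (2*1*Real.cosh u + 2*u*Real.sinh u) with hA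
  set W := β*Real.sinh u - 2*u*Real.cosh u with hW2
  have iden : W*(Real.sinh u^2 + u*(Real.cosh u*Real.sinh u - u)) - u*Real.sinh u^2*A
      = β*Real.sinh u*(Real.sinh u^2-u^2) + 2*u^2*(u*Real.cosh u-Real.sinh u) := by
    rw [hA, hW2]
    linear_combination (-2*u^2*Real.sinh u) * hcsq
  have e1 : 0 < β*Real.sinh u*(Real.sinh u^2-u^2) := by
    apply mul_pos (mul_pos hβ hs)
    nlinarith
  have e2 : 0 < 2*u^2*(u*Real.cosh u-Real.sinh u) := by
    apply mul_pos (by positivity)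
    linarith
  have hrw : A/W - u⁻¹ - (Real.cosh u*Real.sinh u - u)/Real.sinh u^2
      = (u*Real.sinh u^2*A - W*(Real.sinh u^2 + u*(Real.cosh u*Real.sinh u - u)))
        /(u*Real.sinh u^2*W) := by
    field_simp
    ring
  rw [hrw]
  apply div_neg_of_neg_of_pos
  · nlinarith [iden, e1, e2]
  · positivity

lemma Phi_strictAnti (hβ : 0 < β) : StrictAntiOn (Phi β q) (U β) := by
  apply strictAntiOn_of_deriv_neg (U_convex β)
  · intro x hx
    exact (hasDerivAt_Phi (q := q) hx).continuousAt.continuousWithinAt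
  · intro x hx
    have hx' := interior_subset hx
    rw [(hasDerivAt_Phi (q := q) hx').deriv]
    exact Phi_deriv_neg (q := q) hβ hx'


lemma crit_pos_phi (hq : 0 < q) (hβ : 0 < β) {m s : ℝ} (hm : 0 < m) (hs0 : 0 < s)
    (hs1 : s < 1)
    (hcons : s * Real.sinh (β*m/2) = m * Real.cosh (β*m/2))
    (hstar : Real.log (2*Real.cosh (β*m/2)) + Real.log (1-s) - Real.log s - Real.log q
      = β/2*s) :
    β*m/2 ∈ U β ∧ Phi β q (β*m/2) = 0 ∧ s = m * Real.cosh (β*m/2) / Real.sinh (β*m/2) := by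
  set u := β*m/2 with hu
  have hu0 : 0 < u := by rw [hu]; positivity
  have hsinh : 0 < Real.sinh u := Real.sinh_pos_iff.2 hu0
  have hc : 0 < Real.cosh u := Real.cosh_pos u
  have hsval : s = m * Real.cosh u / Real.sinh u := by
    rw [eq_div_iff hsinh.ne']
    linarith [hcons]
  have hT : T u = β/2*s := by
    unfold T
    rw [hsval, hu]
    field_simp
    try ring
  have hUβ : u ∈ U β := by
    refine ⟨hu0, ?_⟩
    rw [hT]
    nlinarith [hs1, hβ]
  have hW := W_pos hUβ
  have h1s : (0:ℝ) < 1 - s := by linarith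
  have hid : β*Real.sinh u - 2*u*Real.cosh u = (2*Real.cosh u) * (1-s) / s * u := by
    rw [hsval, hu]
    field_simp
    try ring
  have hlogW : Real.log (β*Real.sinh u - 2*u*Real.cosh u)
      = Real.log (2*Real.cosh u) + Real.log (1-s) - Real.log s + Real.log u := by
    rw [hid, Real.log_mul (by positivity) hu0.ne', Real.log_div (by positivity) hs0.ne',
      Real.log_mul (by positivity) h1s.ne']
    try ring
  refine ⟨hUβ, ?_, hsval⟩
  unfold Phi
  rw [hlogW, hT]
  linarith [hstar]

lemma R0_zero_of_star {s : ℝ}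
    (hstar : Real.log (2*Real.cosh (β*0/2)) + Real.log (1-s) - Real.log s - Real.log q
      = β/2*s) : R0 β q s = 0 := by
  unfold R0
  have h : Real.cosh (β*0/2) = 1 := by norm_num
  rw [h] at hstar
  norm_num at hstar
  linarith [hstar]

lemma MF_of_R0 (hq : 0 < q) {s : ℝ} (hs0 : 0 < s) (hs1 : s < 1) (hR : R0 β q s = 0) :
    Real.exp (-β*(s/2)) = q*(s/2)/(1-2*(s/2)) := by
  have h1 : (0:ℝ) < 1 - s := by linarith
  rw [show (1:ℝ)-2*(s/2) = 1-s by ring, eq_div_iff h1.ne']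
  unfold R0 at hR
  have hexp : -β*(s/2) = Real.log q + Real.log s - Real.log 2 - Real.log (1-s) := by
    linarith
  rw [hexp, Real.exp_sub, Real.exp_sub, Real.exp_add, Real.exp_log hq, Real.exp_log hs0,
    Real.exp_log (by norm_num : (0:ℝ) < 2), Real.exp_log h1]
  field_simp

lemma R0_of_MF (hq : 0 < q) {z : ℝ} (hz : 0 < z) (hz2 : z < 1/2)
    (hMF : Real.exp (-β*z) = q*z/(1-2*z)) : R0 β q (2*z) = 0 := by
  have h1 : (0:ℝ) < 1-2*z := by linarith
  have hlog := congrArg Real.log hMF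
  rw [Real.log_exp, Real.log_div (by positivity) h1.ne',
    Real.log_mul hq.ne' hz.ne'] at hlog
  unfold R0
  rw [Real.log_mul (by norm_num : (2:ℝ) ≠ 0) hz.ne']
  linarith [hlog]

lemma s_gt_crit (hq : 0 < q) (hβ : 0 < β) (hbig : 2 + q*Real.exp 1 < β) {s : ℝ}
    (hs0 : 0 < s) (hs1 : s < 1) (h0 : R0 β q s = 0) : 1 < β*s/2 := by
  have hqe : 0 < q*Real.exp 1 := by positivity
  have hβ2 : 2 < β := by linarith
  have h2β : (2:ℝ)/β < 1 := by rw [div_lt_one (by linarith)]; linarith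
  have h2β0 : (0:ℝ) < 2/β := by positivity
  have hval : R0 β q (2/β) = Real.log (β-2) - Real.log q - 1 := by
    unfold R0
    have e1 : Real.log 2 + Real.log (1-2/β) = Real.log (2*(1-2/β)) :=
      (Real.log_mul (by norm_num) (by linarith)).symm
    have e2 : Real.log (2*(1-2/β)) - Real.log (2/β) = Real.log ((2*(1-2/β))/(2/β)) :=
      (Real.log_div (ne_of_gt (by nlinarith)) h2β0.ne').symm
    have e3 : (2*(1-2/β))/(2/β) = β-2 := by
      field_simp
    have e4 : β/2*(2/β) = 1 := by field_simp
    linarith [e1, e2, e4, congrArg Real.log e3]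
  have hpos : 0 < R0 β q (2/β) := by
    rw [hval]
    have : Real.log (q*Real.exp 1) < Real.log (β-2) :=
      Real.log_lt_log hqe (by linarith)
    rw [Real.log_mul hq.ne' (Real.exp_ne_zero 1), Real.log_exp] at this
    linarith
  rcases lt_trichotomy s (2/β) with h | h | h
  · exfalso
    have := R0_strictAnti (q := q) hβ ⟨hs0, hs1⟩ ⟨h2β0, h2β⟩ h
    rw [h0] at this
    linarith
  · exfalso
    rw [h] at h0
    linarith [hpos, h0]
  · have h2 : 2 < s*β := (div_lt_iff₀ (by linarith : (0:ℝ) < β)).1 h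
    linarith

lemma Phi_neg (hq : 0 < q) (hβ : 0 < β) (hβq : β ≤ 2 + q*Real.exp 1) :
    ∀ u ∈ U β, Phi β q u < 0 := by
  intro u hu
  have hβ2 : 2 < β := by
    have h1 := one_lt_T hu.1
    linarith [hu.2]
  have hG : Real.log (β - 2) - Real.log q - 1 ≤ 0 := by
    have h1 : Real.log (β-2) ≤ Real.log (q*Real.exp 1) :=
      Real.log_le_log (by linarith) (by linarith)
    rw [Real.log_mul hq.ne' (Real.exp_ne_zero 1), Real.log_exp] at h1
    linarith
  have hu20 : 0 < u/2 := by linarith [hu.1]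
  have hu2 : u/2 ∈ U β := U_mem_of_le hu hu20 (by linarith [hu.1])
  have hlt : Phi β q u < Phi β q (u/2) :=
    Phi_strictAnti hβ hu2 hu (by linarith [hu.1])
  -- Phi (u/2) ≤ G₀ via limit
  have hslope : Filter.Tendsto (fun v : ℝ => Real.sinh v / v) (nhdsWithin 0 (Set.Ioi 0))
      (nhds 1) := by
    have h := hasDerivAt_iff_tendsto_slope.1 (Real.hasDerivAt_sinh 0)
    rw [Real.cosh_zero] at h
    have h2 : Filter.Tendsto (slope Real.sinh 0) (nhdsWithin 0 (Set.Ioi 0)) (nhds 1) :=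
      h.mono_left (nhdsWithin_mono 0 (fun x hx => ne_of_gt hx))
    refine h2.congr' ?_
    filter_upwards [self_mem_nhdsWithin] with v hv
    rw [slope_def_field]
    simp [Real.sinh_zero]
  have hcosh1 : Filter.Tendsto (fun v : ℝ => Real.cosh v) (nhdsWithin 0 (Set.Ioi 0))
      (nhds 1) := by
    have h := Real.continuous_cosh.tendsto 0
    have h2 := h.mono_left (nhdsWithin_le_nhds (s := Set.Ioi (0:ℝ)))
    simpa using h2
  have harg : Filter.Tendsto (fun v : ℝ => β*(Real.sinh v/v) - 2*Real.cosh v)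
      (nhdsWithin 0 (Set.Ioi 0)) (nhds (β - 2)) := by
    have h1 := (hslope.const_mul β).sub (hcosh1.const_mul 2)
    simpa using h1
  have hTt : Filter.Tendsto (fun v : ℝ => Real.cosh v/(Real.sinh v/v))
      (nhdsWithin 0 (Set.Ioi 0)) (nhds 1) := by
    have := hcosh1.div hslope one_ne_zero
    rw [div_one] at this; exact this
  have hlog : Filter.Tendsto (fun v : ℝ => Real.log (β*(Real.sinh v/v) - 2*Real.cosh v))
      (nhdsWithin 0 (Set.Ioi 0)) (nhds (Real.log (β-2))) :=
    harg.log (by linarith : β - 2 ≠ 0)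
  have htend : Filter.Tendsto
      (fun v : ℝ => Real.log (β*(Real.sinh v/v) - 2*Real.cosh v) - Real.log q
        - Real.cosh v/(Real.sinh v/v))
      (nhdsWithin 0 (Set.Ioi 0)) (nhds (Real.log (β-2) - Real.log q - 1)) :=
    (hlog.sub tendsto_const_nhds).sub hTt
  have hev : ∀ᶠ v in nhdsWithin 0 (Set.Ioi 0),
      Phi β q (u/2) ≤ Real.log (β*(Real.sinh v/v) - 2*Real.cosh v) - Real.log q
        - Real.cosh v/(Real.sinh v/v) := by
    filter_upwards [Ioo_mem_nhdsGT_of_mem (Set.mem_Ico.2 ⟨le_refl 0, hu20⟩)] with v hv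
    have hvU : v ∈ U β := U_mem_of_le hu2 hv.1 hv.2.le
    have hvW := W_pos hvU
    have hsv : Real.sinh v ≠ 0 := (Real.sinh_pos_iff.2 hv.1).ne'
    have heq : Real.log (β*(Real.sinh v/v) - 2*Real.cosh v) - Real.log q
        - Real.cosh v/(Real.sinh v/v) = Phi β q v := by
      unfold Phi T
      rw [show β*(Real.sinh v/v) - 2*Real.cosh v
          = (β*Real.sinh v - 2*v*Real.cosh v)/v by field_simp [hv.1.ne']; try ring,
        Real.log_div hvW.ne' hv.1.ne']
      rw [show Real.cosh v/(Real.sinh v/v) = v*Real.cosh v/Real.sinh v by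
        rw [div_div_eq_mul_div]; ring_nf]
      try ring
    rw [heq]
    exact (Phi_strictAnti hβ hvU hu2 hv.2).le
  have hfin : Phi β q (u/2) ≤ Real.log (β-2) - Real.log q - 1 :=
    ge_of_tendsto htend hev
  linarith


lemma hasDerivAt_chi_m (s m : ℝ) :
    HasDerivAt (fun t => chi β q a t s)
      (-(β/2)*m + s*(β*Real.sinh (β*m/2)/(2*Real.cosh (β*m/2)))) m := by
  have hc : 0 < Real.cosh (β*m/2) := Real.cosh_pos _
  have hβt : HasDerivAt (fun t : ℝ => β*t/2) (β*1/2) m :=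
    ((hasDerivAt_id m).const_mul β).div_const 2
  have hcosh : HasDerivAt (fun t : ℝ => Real.cosh (β*t/2)) (Real.sinh (β*m/2)*(β*1/2)) m :=
    (Real.hasDerivAt_cosh (β*m/2)).comp (h₂ := Real.cosh) m hβt
  have h2cosh : HasDerivAt (fun t : ℝ => 2*Real.cosh (β*t/2))
      (2*(Real.sinh (β*m/2)*(β*1/2))) m := hcosh.const_mul 2
  have hlog : HasDerivAt (fun t : ℝ => Real.log (2*Real.cosh (β*t/2)))
      (2*(Real.sinh (β*m/2)*(β*1/2))/(2*Real.cosh (β*m/2))) m :=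
    h2cosh.log (by positivity)
  have hsL : HasDerivAt (fun t : ℝ => s * Real.log (2*Real.cosh (β*t/2)))
      (s * (2*(Real.sinh (β*m/2)*(β*1/2))/(2*Real.cosh (β*m/2)))) m := hlog.const_mul s
  have h1 : HasDerivAt (fun _ : ℝ => -(β/4)*s^2) 0 m := hasDerivAt_const _ _
  have h2 : HasDerivAt (fun t : ℝ => (β/4)*t^2) ((β/4)*(2*m^1)) m :=
    (hasDerivAt_pow 2 m).const_mul _
  have h3 : HasDerivAt (fun _ : ℝ => s*Real.log s) 0 m := hasDerivAt_const _ _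
  have h4 : HasDerivAt (fun _ : ℝ => (1-s)*Real.log (1-s)) 0 m := hasDerivAt_const _ _
  have h5 : HasDerivAt (fun _ : ℝ => s*Real.log a) 0 m := hasDerivAt_const _ _
  have h6 : HasDerivAt (fun _ : ℝ => (1-s)*Real.log (q*a)) 0 m := hasDerivAt_const _ _
  have H := (((((h1.sub h2).add hsL).sub h3).sub h4).add h5).add h6
  have Hc : HasDerivAt (fun t => chi β q a t s)
      (0 - (β/4)*(2*m^1) + s * (2*(Real.sinh (β*m/2)*(β*1/2))/(2*Real.cosh (β*m/2)))
        - 0 - 0 + 0 + 0) m := by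
    unfold chi
    exact H
  convert Hc using 1
  field_simp
  ring

lemma sym_not_max (hq : 0 < q) (ha : 0 < a) (hβ : 0 < β) (hbig : 2 + q*Real.exp 1 < β)
    {p : ℝ×ℝ} (hp : p ∈ rect)
    (hmax : IsMaxOn (fun p : ℝ × ℝ => chi β q a p.1 p.2) rect p) : p.1 ≠ 0 := by
  intro hm0
  have hs0 := argmax_s_pos hq ha hβ hp hmax
  have hs1 := argmax_s_lt_one hq ha hβ hp hmax
  have hstar := argmax_star hq ha hβ hp hmax hs0 hs1
  rw [hm0] at hstar
  have hR0 : R0 β q p.2 = 0 := R0_zero_of_star hstar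
  have hT0 : 1 < β*p.2/2 := s_gt_crit hq hβ hbig hs0 hs1 hR0
  have hT0pos : (0:ℝ) < β*p.2/2 := by linarith
  have hlogT0 : 0 < Real.log (β*p.2/2) := Real.log_pos hT0
  set mh := min 1 ((2/β)*Real.log (β*p.2/2)) with hmh
  have hmh0 : 0 < mh := lt_min one_pos (by positivity)
  have hmh1 : mh ≤ 1 := min_le_left _ _
  have hmhlog : β*mh/2 ≤ Real.log (β*p.2/2) := by
    have h := min_le_right 1 ((2/β)*Real.log (β*p.2/2))
    have h2 : β*mh ≤ β*((2/β)*Real.log (β*p.2/2)) :=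
      mul_le_mul_of_nonneg_left h hβ.le
    have he : β*((2/β)*Real.log (β*p.2/2)) = 2*Real.log (β*p.2/2) := by
      field_simp
    linarith
  have hmono : StrictMonoOn (fun t => chi β q a t p.2) (Set.Icc 0 mh) := by
    apply strictMonoOn_of_deriv_pos (convex_Icc 0 mh)
    · exact (chi_cont.comp (continuous_id.prodMk continuous_const)).continuousOn
    · intro t ht
      rw [interior_Icc] at ht
      rw [(hasDerivAt_chi_m p.2 t).deriv]
      have hu0 : 0 < β*t/2 := by
        have := mul_pos hβ ht.1
        linarith
      have hsinh : 0 < Real.sinh (β*t/2) := Real.sinh_pos_iff.2 hu0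
      have hcosh : 0 < Real.cosh (β*t/2) := Real.cosh_pos _
      have hc_lt : Real.cosh (β*t/2) < Real.exp (β*t/2) := by
        rw [Real.cosh_eq]
        have := Real.exp_lt_exp.2 (show -(β*t/2) < β*t/2 by linarith)
        linarith
      have hexp_le : Real.exp (β*t/2) ≤ β*p.2/2 := by
        rw [← Real.exp_log hT0pos]
        apply Real.exp_le_exp.2
        have h1 : β*t/2 ≤ β*mh/2 := by nlinarith [ht.2]
        linarith
      have hTlt : T (β*t/2) < Real.cosh (β*t/2) := by
        unfold T
        rw [div_lt_iff₀ hsinh]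
        have := Real.self_lt_sinh_iff.2 hu0
        nlinarith
      have hkey : T (β*t/2) < β*p.2/2 := by linarith
      unfold T at hkey
      rw [div_lt_iff₀ hsinh] at hkey
      rw [show -(β/2)*t + p.2*(β*Real.sinh (β*t/2)/(2*Real.cosh (β*t/2)))
          = (p.2*β*Real.sinh (β*t/2) - β*t*Real.cosh (β*t/2))/(2*Real.cosh (β*t/2)) by
        field_simp; ring]
      apply div_pos ?_ (by positivity)
      nlinarith [hkey]
  have hlt : chi β q a 0 p.2 < chi β q a mh p.2 :=
    hmono (Set.mem_Icc.2 ⟨le_refl 0, hmh0.le⟩) (Set.mem_Icc.2 ⟨hmh0.le, le_refl mh⟩) hmh0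
  have hmem : ((mh, p.2) : ℝ×ℝ) ∈ rect := ⟨Set.mem_Icc.2 ⟨by linarith, hmh1⟩, hp.2⟩
  have hle := hmax hmem
  simp only [Set.mem_setOf_eq] at hle
  rw [hm0] at hle
  exact absurd hle (not_le.2 hlt)


lemma argmax_neg {p : ℝ×ℝ} (hp : p ∈ rect)
    (hmax : IsMaxOn (fun p : ℝ × ℝ => chi β q a p.1 p.2) rect p) :
    ((-p.1, p.2) : ℝ×ℝ) ∈ rect ∧
      IsMaxOn (fun p : ℝ × ℝ => chi β q a p.1 p.2) rect (-p.1, p.2) := by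
  have h1 := hp.1
  rw [Set.mem_Icc] at h1
  refine ⟨⟨Set.mem_Icc.2 ⟨by dsimp only; linarith, by dsimp only; linarith⟩, hp.2⟩, ?_⟩
  intro x hx
  have := hmax hx
  simp only [Set.mem_setOf_eq] at this ⊢
  rw [chi_even]
  exact this

lemma triple_eq {ν : ℝ×ℝ×ℝ} {A B C : ℝ} (h1 : ν.1 = A) (h2 : ν.2.1 = B)
    (h3 : ν.2.2 = C) : ν = (A, B, C) :=
  Prod.ext h1 (Prod.ext h2 h3)

end lemmas

end WRaux

/-- Second order phase transition of the symmetric Curie-Weiss Widom-Rowlinson model: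
for `β ≤ 2 + q e` the unique maximizer of `ν ↦ -β ν(1)ν(-1) - I(ν|α)` on the simplex
is the unique symmetric solution of the mean-field equation; for `β > 2 + q e` there
are exactly two maximizers, related by exchanging the weights of `+1` and `-1`. -/
theorem WR_second_order_phase_transition (q a₁ β : ℝ) (hq : 0 < q) (ha₁ : 0 < a₁)
    (hnorm : 2 * a₁ + q * a₁ = 1) (hβ : 0 < β) :
    (β ≤ 2 + q * Real.exp 1 →
      ∃! ν : ℝ × ℝ × ℝ,
        ν ∈ WRsimplex ∧ IsMaxOn (WRfreeEnergy β a₁ q) WRsimplex ν ∧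
          ν.1 = ν.2.2 ∧
          Real.exp (-β * ν.2.2) = q * ν.2.2 / (1 - 2 * ν.2.2)) ∧
    (2 + q * Real.exp 1 < β →
      ∃ ν₁ ν₂ : ℝ × ℝ × ℝ, ν₁ ≠ ν₂ ∧
        ν₂ = (ν₁.2.2, ν₁.2.1, ν₁.1) ∧
        {ν ∈ WRsimplex | IsMaxOn (WRfreeEnergy β a₁ q) WRsimplex ν} = {ν₁, ν₂}) := by
  classical
  obtain ⟨p, hpmem, hpmax⟩ := WRaux.exists_argmax (β := β) (q := q) (a := a₁)
  have hs0 := WRaux.argmax_s_pos hq ha₁ hβ hpmem hpmax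
  have hs1 := WRaux.argmax_s_lt_one hq ha₁ hβ hpmem hpmax
  have hstar := WRaux.argmax_star hq ha₁ hβ hpmem hpmax hs0 hs1
  obtain ⟨hFmax, hcons⟩ := WRaux.argmax_F_and_cons hq ha₁ hβ hpmem hpmax
  constructor
  · -- subcritical / critical case
    intro hble
    have hm0 : p.1 = 0 := by
      by_contra hne
      rcases lt_or_gt_of_ne hne with hneg | hpos
      · obtain ⟨hpmem', hpmax'⟩ := WRaux.argmax_neg hpmem hpmax
        have hs0' := WRaux.argmax_s_pos hq ha₁ hβ hpmem' hpmax'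
        have hs1' := WRaux.argmax_s_lt_one hq ha₁ hβ hpmem' hpmax'
        have hstar' := WRaux.argmax_star hq ha₁ hβ hpmem' hpmax' hs0' hs1'
        obtain ⟨_, hcons'⟩ := WRaux.argmax_F_and_cons hq ha₁ hβ hpmem' hpmax'
        have hpos' : (0:ℝ) < (-p.1, p.2).1 := by dsimp only; linarith
        obtain ⟨hU, hPhi, _⟩ := WRaux.crit_pos_phi hq hβ hpos' hs0' hs1' hcons' hstar'
        exact absurd hPhi (ne_of_lt (WRaux.Phi_neg hq hβ hble _ hU))
      · obtain ⟨hU, hPhi, _⟩ := WRaux.crit_pos_phi hq hβ hpos hs0 hs1 hcons hstar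
        exact absurd hPhi (ne_of_lt (WRaux.Phi_neg hq hβ hble _ hU))
    have hstar0 : Real.log (2*Real.cosh (β*0/2)) + Real.log (1-p.2) - Real.log p.2
        - Real.log q = β/2*p.2 := by rw [← hm0]; exact hstar
    have hR0 : WRaux.R0 β q p.2 = 0 := WRaux.R0_zero_of_star hstar0
    have hMF := WRaux.MF_of_R0 (β := β) hq hs0 hs1 hR0
    have hnu : WRaux.nu β p.1 p.2 = ((p.2/2 : ℝ), 1-p.2, p.2/2) := by
      rw [WRaux.nu_eq_e hcons, hm0]
      norm_num
    refine ⟨(p.2/2, 1-p.2, p.2/2), ⟨⟨by dsimp only; linarith, by dsimp only; linarith,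
      by dsimp only; linarith, by dsimp only; ring⟩, ?_, rfl, ?_⟩, ?_⟩
    · rw [← hnu]; exact hFmax
    · exact hMF
    · rintro ν' ⟨⟨hx', hy', hz', hsum'⟩, hmax', hsym', hMF'⟩
      have hy'eq : ν'.2.1 = 1 - 2*ν'.2.2 := by rw [← hsym'] at hsum' ⊢; linarith
      have hzle : ν'.2.2 ≤ 1/2 := by linarith [hy', hy'eq]
      have hzpos : 0 < ν'.2.2 := by
        rcases hz'.eq_or_lt with h | h
        · exfalso
          rw [← h] at hMF'
          simp at hMF'
        · exact h
      have hzlt : ν'.2.2 < 1/2 := by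
        rcases hzle.eq_or_lt with h | h
        · exfalso
          rw [h] at hMF'
          norm_num at hMF'
        · exact h
      have hR0' : WRaux.R0 β q (2*ν'.2.2) = 0 := WRaux.R0_of_MF hq hzpos hzlt hMF'
      have heq : 2*ν'.2.2 = p.2 := by
        apply (WRaux.R0_strictAnti (β := β) (q := q) hβ).injOn
          (Set.mem_Ioo.2 ⟨by linarith, by linarith⟩) (Set.mem_Ioo.2 ⟨hs0, hs1⟩)
        rw [hR0', hR0]
      exact WRaux.triple_eq (by rw [hsym']; linarith) (by rw [hy'eq]; linarith) (by linarith)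
  · -- supercritical case
    intro hbig
    obtain ⟨m₁, s₁, hm₁, hmem₁, hmax₁⟩ :
        ∃ m s : ℝ, 0 < m ∧ ((m, s) : ℝ×ℝ) ∈ WRaux.rect ∧
          IsMaxOn (fun p : ℝ × ℝ => WRaux.chi β q a₁ p.1 p.2) WRaux.rect (m, s) := by
      have hne := WRaux.sym_not_max hq ha₁ hβ hbig hpmem hpmax
      rcases lt_or_gt_of_ne hne with hneg | hpos
      · obtain ⟨hpmem', hpmax'⟩ := WRaux.argmax_neg hpmem hpmax
        exact ⟨-p.1, p.2, by linarith, hpmem', hpmax'⟩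
      · exact ⟨p.1, p.2, hpos, by rwa [Prod.mk.eta], by rwa [Prod.mk.eta]⟩
    have hs0₁ := WRaux.argmax_s_pos hq ha₁ hβ hmem₁ hmax₁
    have hs1₁ := WRaux.argmax_s_lt_one hq ha₁ hβ hmem₁ hmax₁
    have hstar₁ := WRaux.argmax_star hq ha₁ hβ hmem₁ hmax₁ hs0₁ hs1₁
    obtain ⟨hFmax₁, hcons₁⟩ := WRaux.argmax_F_and_cons hq ha₁ hβ hmem₁ hmax₁
    dsimp only at hs0₁ hs1₁ hstar₁ hcons₁
    obtain ⟨hU₁, hPhi₁, hsval₁⟩ := WRaux.crit_pos_phi hq hβ hm₁ hs0₁ hs1₁ hcons₁ hstar₁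
    obtain ⟨hmem₂, hmax₂⟩ := WRaux.argmax_neg hmem₁ hmax₁
    obtain ⟨hFmax₂, hcons₂⟩ := WRaux.argmax_F_and_cons hq ha₁ hβ hmem₂ hmax₂
    dsimp only at hFmax₂ hcons₂
    refine ⟨((s₁+m₁)/2, 1-s₁, (s₁-m₁)/2), ((s₁-m₁)/2, 1-s₁, (s₁+m₁)/2), ?_, rfl, ?_⟩
    · intro h
      have h1 := congrArg Prod.fst h
      dsimp only at h1
      linarith
    · ext ν
      simp only [Set.mem_setOf_eq, Set.mem_insert_iff, Set.mem_singleton_iff]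
      constructor
      · rintro ⟨hν, hνmax⟩
        have hargmax := WRaux.F_max_to_argmax hq ha₁ hβ hν hνmax
        have hmem' := WRaux.simplex_pair_mem_rect hν
        have hsν0 := WRaux.argmax_s_pos hq ha₁ hβ hmem' hargmax
        have hsν1 := WRaux.argmax_s_lt_one hq ha₁ hβ hmem' hargmax
        have hstarν := WRaux.argmax_star hq ha₁ hβ hmem' hargmax hsν0 hsν1
        obtain ⟨_, hconsν⟩ := WRaux.argmax_F_and_cons hq ha₁ hβ hmem' hargmax
        dsimp only at hsν0 hsν1 hstarν hconsν
        have hmν0 : ν.1 - ν.2.2 ≠ 0 := by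
          have := WRaux.sym_not_max hq ha₁ hβ hbig hmem' hargmax
          simpa using this
        obtain ⟨hνx, hνy, hνz, hνsum⟩ := hν
        rcases lt_or_gt_of_ne hmν0 with hneg | hpos
        · right
          obtain ⟨hmem'', hargmax''⟩ := WRaux.argmax_neg hmem' hargmax
          have hsν0' := WRaux.argmax_s_pos hq ha₁ hβ hmem'' hargmax''
          have hsν1' := WRaux.argmax_s_lt_one hq ha₁ hβ hmem'' hargmax''
          have hstarν' := WRaux.argmax_star hq ha₁ hβ hmem'' hargmax'' hsν0' hsν1'
          obtain ⟨_, hconsν'⟩ := WRaux.argmax_F_and_cons hq ha₁ hβ hmem'' hargmax''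
          dsimp only at hsν0' hsν1' hstarν' hconsν'
          have hpos' : (0:ℝ) < -(ν.1 - ν.2.2) := by linarith
          obtain ⟨hUν, hPhiν, hsvalν⟩ :=
            WRaux.crit_pos_phi hq hβ hpos' hsν0' hsν1' hconsν' hstarν'
          have huu : β*(-(ν.1 - ν.2.2))/2 = β*m₁/2 := by
            apply (WRaux.Phi_strictAnti (β := β) (q := q) hβ).injOn hUν hU₁
            rw [hPhiν, hPhi₁]
          have hmm : -(ν.1 - ν.2.2) = m₁ := by
            have h2 : β*(-(ν.1 - ν.2.2)) = β*m₁ := by linarith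
            exact mul_left_cancel₀ hβ.ne' h2
          have hss : ν.1 + ν.2.2 = s₁ := by
            rw [hsvalν, hsval₁, hmm]
          exact WRaux.triple_eq (by linarith) (by linarith) (by linarith)
        · left
          obtain ⟨hUν, hPhiν, hsvalν⟩ :=
            WRaux.crit_pos_phi hq hβ hpos hsν0 hsν1 hconsν hstarν
          have huu : β*(ν.1 - ν.2.2)/2 = β*m₁/2 := by
            apply (WRaux.Phi_strictAnti (β := β) (q := q) hβ).injOn hUν hU₁
            rw [hPhiν, hPhi₁]
          have hmm : ν.1 - ν.2.2 = m₁ := by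
            have h2 : β*(ν.1 - ν.2.2) = β*m₁ := by linarith
            exact mul_left_cancel₀ hβ.ne' h2
          have hss : ν.1 + ν.2.2 = s₁ := by
            rw [hsvalν, hsval₁, hmm]
          exact WRaux.triple_eq (by linarith) (by linarith) (by linarith)
      · have he₁ : WRaux.nu β m₁ s₁ = (((s₁+m₁)/2 : ℝ), 1-s₁, (s₁-m₁)/2) :=
          WRaux.nu_eq_e hcons₁
        have he₂ : WRaux.nu β (-m₁) s₁ = (((s₁-m₁)/2 : ℝ), 1-s₁, (s₁+m₁)/2) := by
          rw [WRaux.nu_eq_e hcons₂]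
          norm_num
          constructor <;> ring
        rintro (rfl | rfl)
        · exact ⟨by rw [← he₁]; exact WRaux.nu_mem β hs0₁.le hs1₁.le m₁,
            by rw [← he₁]; exact hFmax₁⟩
        · exact ⟨by rw [← he₂]; exact WRaux.nu_mem β hs0₁.le hs1₁.le (-m₁),
            by rw [← he₂]; exact hFmax₂⟩
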